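/- Let H be a complex Hilbert space, let M be a von Neumann algebra on H, and let Ω ∈ H be a separating vector for M (i.e. m ∈ M and mΩ = 0 imply m = 0). Let N ≥ 1 and let a_1, …, a_N and b_1, …, b_N be elements of M satisfying the Cuntz relations: a_i* a_j = δ_{ij}·1, Σ_i a_i a_i* = 1, b_i* b_j = δ_{ij}·1, Σ_i b_i b_i* = 1. If a_i Ω lies in the linear span of {b_1 Ω, …, b_N Ω} for every i, then there exists a unitary N×N complex matrix R = (R_{ij}) such that a_i = Σ_{j=1}^N R_{ij} b_j for every i, and consequently Σ_{i=1}^N a_i* m a_i = Σ_{i=1}^N b_i* m b_i for every m ∈ M (i.e. the two Kraus channels coincide). -/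
import Mathlib


open Filter

namespace BSPaper

set_option maxHeartbeats 1000000 in
/-- Rigidity of Kraus channels built from Cuntz isometries: if `(a_i)` and
`(b_i)` satisfy the Cuntz relations in a von Neumann algebra `M` with separating vector `Ω`,
and each `a_i Ω` lies in the span of the `b_j Ω`, then `a_i = Σ_j R_{ij} b_j` for a unitary
matrix `R`, and the two Kraus channels coincide. -/
theorem cuntz_kraus_rigidity {H : Type*} [NormedAddCommGroup H]
    [InnerProductSpace ℂ H] [CompleteSpace H]
    (M : VonNeumannAlgebra H) (Ω : H)
    (hsep : ∀ m : M.toStarSubalgebra, (m : H →L[ℂ] H) Ω = 0 → m = 0)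
    (N : ℕ) (hN : 1 ≤ N)
    (a b : Fin N → M.toStarSubalgebra)
    (ha1 : ∀ i j, star (a i) * a j = if i = j then 1 else 0)
    (ha2 : ∑ i, a i * star (a i) = 1)
    (hb1 : ∀ i j, star (b i) * b j = if i = j then 1 else 0)
    (hb2 : ∑ i, b i * star (b i) = 1)
    (hspan : ∀ i, (a i : H →L[ℂ] H) Ω ∈
      Submodule.span ℂ (Set.range fun j => (b j : H →L[ℂ] H) Ω)) :
    ∃ R : Matrix (Fin N) (Fin N) ℂ, R ∈ Matrix.unitaryGroup (Fin N) ℂ ∧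
      (∀ i, a i = ∑ j, R i j • b j) ∧
      (∀ m : M.toStarSubalgebra,
        ∑ i, star (a i) * m * a i = ∑ i, star (b i) * m * b i) := by
  classical
  by_cases hΩ : Ω = 0
  · have hall : ∀ m : M.toStarSubalgebra, m = 0 := fun m => hsep m (by simp [hΩ])
    refine ⟨1, one_mem _, fun i => ?_, fun m => ?_⟩
    · rw [hall (a i), hall (∑ j, (1 : Matrix (Fin N) (Fin N) ℂ) i j • b j)]
    · rw [hall (∑ i, star (a i) * m * a i), hall (∑ i, star (b i) * m * b i)]
  · have hc : ∀ i, ∃ c : Fin N → ℂ,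
        (∑ j, c j • (b j : H →L[ℂ] H) Ω) = (a i : H →L[ℂ] H) Ω := fun i =>
      (Submodule.mem_span_range_iff_exists_fun ℂ).mp (hspan i)
    choose c hcc using hc
    set R : Matrix (Fin N) (Fin N) ℂ := fun i j => c i j with hRdef
    -- a i = ∑ j, R i j • b j
    have key : ∀ i, a i = ∑ j, R i j • b j := by
      intro i
      have h0 : (((∑ j, R i j • b j) - a i : M.toStarSubalgebra) : H →L[ℂ] H) Ω = 0 := by
        push_cast
        simp only [Pi.sub_apply, Finset.sum_apply, Pi.smul_apply]
        rw [hcc i, sub_self]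
      exact (sub_eq_zero.mp (hsep _ h0)).symm
    -- scalar injectivity
    have hscal : ∀ s t : ℂ, s • (1 : M.toStarSubalgebra) = t • 1 → s = t := by
      intro s t hst
      have h2 : s • Ω = t • Ω := by
        have := congrArg (fun x : M.toStarSubalgebra => (x : H →L[ℂ] H) Ω) hst
        simpa using this
      have h3 : (s - t) • Ω = 0 := by rw [sub_smul, h2, sub_self]
      rcases smul_eq_zero.mp h3 with h | h
      · exact sub_eq_zero.mp h
      · exact absurd h hΩ
    -- expansion of star (a i) * a j
    have expand : ∀ i j, star (a i) * a j
        = (∑ k, star (R i k) * R j k) • (1 : M.toStarSubalgebra) := by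
      intro i j
      calc star (a i) * a j
          = (∑ k, star (R i k) • star (b k)) * (∑ l, R j l • b l) := by
            rw [key i, key j, star_sum]
            congr 1
            exact Finset.sum_congr rfl fun k _ => star_smul _ _
        _ = ∑ k, ∑ l, (star (R i k) * R j l) • (star (b k) * b l) := by
            rw [Finset.sum_mul_sum]
            exact Finset.sum_congr rfl fun k _ => Finset.sum_congr rfl fun l _ =>
              smul_mul_smul_comm _ _ _ _
        _ = ∑ k, (star (R i k) * R j k) • (1 : M.toStarSubalgebra) := by
            refine Finset.sum_congr rfl fun k _ => ?_
            rw [Finset.sum_eq_single_of_mem k (Finset.mem_univ k)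
              (fun l _ hl => by rw [hb1 k l, if_neg (Ne.symm hl), smul_zero]),
              hb1 k k, if_pos rfl]
        _ = (∑ k, star (R i k) * R j k) • (1 : M.toStarSubalgebra) :=
            (Finset.sum_smul).symm
    have hrel : ∀ i j, (∑ k, star (R i k) * R j k) = if i = j then (1 : ℂ) else 0 := by
      intro i j
      apply hscal
      rw [← expand i j, ha1 i j]
      split <;> simp
    have hU : R ∈ Matrix.unitaryGroup (Fin N) ℂ := by
      rw [Matrix.mem_unitaryGroup_iff]
      ext i j
      simp only [Matrix.mul_apply, Matrix.star_apply, Matrix.one_apply]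
      calc ∑ k, R i k * star (R j k)
          = star (∑ k, star (R i k) * R j k) := by
            rw [star_sum]
            refine Finset.sum_congr rfl fun k _ => ?_
            rw [star_mul, star_star, mul_comm]
        _ = if i = j then 1 else 0 := by
            rw [hrel i j]; split <;> simp
    have hcol : ∀ k l, (∑ i, star (R i k) * R i l) = if k = l then (1 : ℂ) else 0 := by
      intro k l
      have h := hU.1
      have h2 := congrFun (congrFun h k) l
      simpa [Matrix.mul_apply, Matrix.star_apply, Matrix.one_apply] using h2
    refine ⟨R, hU, key, fun m => ?_⟩
    calc ∑ i, star (a i) * m * a i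
        = ∑ i, ∑ k, ∑ l, (star (R i k) * R i l) • (star (b k) * m * b l) := by
          refine Finset.sum_congr rfl fun i _ => ?_
          calc star (a i) * m * a i
              = ((∑ k, star (R i k) • star (b k)) * m) * (∑ l, R i l • b l) := by
                rw [key i, star_sum]
                congr 2
                exact Finset.sum_congr rfl fun k _ => star_smul _ _
            _ = (∑ k, star (R i k) • (star (b k) * m)) * (∑ l, R i l • b l) := by
                rw [Finset.sum_mul]
                congr 1
            _ = ∑ k, ∑ l, (star (R i k) * R i l) • (star (b k) * m * b l) := by
                rw [Finset.sum_mul_sum]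
                refine Finset.sum_congr rfl fun k _ => Finset.sum_congr rfl fun l _ => ?_
                rw [smul_mul_smul_comm]
      _ = ∑ k, ∑ l, (∑ i, star (R i k) * R i l) • (star (b k) * m * b l) := by
          rw [Finset.sum_comm]
          refine Finset.sum_congr rfl fun k _ => ?_
          rw [Finset.sum_comm]
          refine Finset.sum_congr rfl fun l _ => ?_
          rw [Finset.sum_smul]
      _ = ∑ k, star (b k) * m * b k := by
          refine Finset.sum_congr rfl fun k _ => ?_
          rw [Finset.sum_eq_single_of_mem k (Finset.mem_univ k)
            (fun l _ hl => by rw [hcol k l, if_neg (Ne.symm hl), zero_smul]),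
            hcol k k, if_pos rfl, one_smul]

end BSPaper
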